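/- arXiv:2309.09559 — 2 statements merged into one kernel-verified Lean document; each statement's English description precedes it below -/
import Mathlib

section
/- Let h be a finite-dimensional quasi-toral Lie superalgebra with t = h_0, and λ ∈ t*. Then the quotient of the universal enveloping algebra U(h) by the ideal generated by {t − λ(t) : t ∈ t} is isomorphic as a superalgebra to the Clifford superalgebra Cl(h_1, B_λ), where B_λ(H1,H2) = λ([H1,H2]). -/
/-- A complex Lie superalgebra, presented as a module with a ℤ/2-grading
(`even`/`odd` complementary submodules) and a bilinear bracket satisfying
super skew-symmetry and the super Jacobi identity (stated case by case on
homogeneous elements). -/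
structure SuperLie (L : Type*) [AddCommGroup L] [Module ℂ L] where
  even : Submodule ℂ L
  odd : Submodule ℂ L
  bracket : L →ₗ[ℂ] L →ₗ[ℂ] L
  compl : IsCompl even odd
  ee_mem : ∀ x ∈ even, ∀ y ∈ even, bracket x y ∈ even
  eo_mem : ∀ x ∈ even, ∀ y ∈ odd, bracket x y ∈ odd
  oe_mem : ∀ x ∈ odd, ∀ y ∈ even, bracket x y ∈ odd
  oo_mem : ∀ x ∈ odd, ∀ y ∈ odd, bracket x y ∈ even
  skew_e : ∀ x ∈ even, ∀ y : L, bracket x y = - bracket y x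
  symm_oo : ∀ x ∈ odd, ∀ y ∈ odd, bracket x y = bracket y x
  jacobi_e : ∀ x ∈ even, ∀ y z : L,
    bracket x (bracket y z) = bracket (bracket x y) z + bracket y (bracket x z)
  jacobi_oe : ∀ x ∈ odd, ∀ y ∈ even, ∀ z : L,
    bracket x (bracket y z) = bracket (bracket x y) z + bracket y (bracket x z)
  jacobi_oo : ∀ x ∈ odd, ∀ y ∈ odd, ∀ z : L,
    bracket x (bracket y z) = bracket (bracket x y) z - bracket y (bracket x z)

/-- The defining relations of `U(𝔥)/I(λ)U(𝔥)`: the universal enveloping superalgebra of a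
Lie superalgebra `𝔥` is the tensor algebra modulo the super-commutator relations
(`xy - yx = [x,y]` for `x` even, `xy + yx = [x,y]` for `x, y` odd), and we further impose
`t = λ(t)` for `t` in the even part (the ideal generated by `{t − λ(t) : t ∈ 𝔱}`). -/
inductive URel {H : Type*} [AddCommGroup H] [Module ℂ H]
    (h : SuperLie H) (lam : H →ₗ[ℂ] ℂ) :
    TensorAlgebra ℂ H → TensorAlgebra ℂ H → Prop
  | comm (x y : H) (hx : x ∈ h.even) :
      URel h lam (TensorAlgebra.ι ℂ x * TensorAlgebra.ι ℂ y)
        (TensorAlgebra.ι ℂ y * TensorAlgebra.ι ℂ x + TensorAlgebra.ι ℂ (h.bracket x y))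
  | anticomm (x y : H) (hx : x ∈ h.odd) (hy : y ∈ h.odd) :
      URel h lam (TensorAlgebra.ι ℂ x * TensorAlgebra.ι ℂ y)
        (-(TensorAlgebra.ι ℂ y * TensorAlgebra.ι ℂ x) + TensorAlgebra.ι ℂ (h.bracket x y))
  | central (t : H) (ht : t ∈ h.even) :
      URel h lam (TensorAlgebra.ι ℂ t) (algebraMap ℂ _ (lam t))

/-- Let `𝔥` be a finite-dimensional quasi-toral Lie superalgebra with
`𝔱 = 𝔥₀` and `λ ∈ 𝔱*` (recorded as a functional `lam` on `𝔥`; only its restriction to the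
even part enters the relations).  Then `U(𝔥)/(t − λ(t) : t ∈ 𝔱)` is isomorphic, as a
superalgebra, to the Clifford superalgebra `Cl(𝔥₁, B_λ)` where `B_λ(H₁,H₂) = λ([H₁,H₂])`
(encoded by a quadratic form `Qlam` on `𝔥₁` with polarization `B_λ`); the isomorphism
matches the generators coming from `𝔥₁` on both sides (in particular it respects the
ℤ/2-gradings). -/
theorem enveloping_quotient_iso_clifford
    {H : Type} [AddCommGroup H] [Module ℂ H] [FiniteDimensional ℂ H]
    (h : SuperLie H)
    (quasitoral : ∀ x ∈ h.even, ∀ y : H, h.bracket x y = 0)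
    (lam : H →ₗ[ℂ] ℂ)
    (Qlam : QuadraticForm ℂ ↥h.odd)
    (hQlam : ∀ v w : ↥h.odd,
      QuadraticMap.polar Qlam v w = lam (h.bracket (v : H) (w : H))) :
    ∃ eqv : RingQuot (URel h lam) ≃ₐ[ℂ] CliffordAlgebra Qlam,
      ∀ v : ↥h.odd,
        eqv (RingQuot.mkAlgHom ℂ (URel h lam) (TensorAlgebra.ι ℂ (v : H))) =
          CliffordAlgebra.ι Qlam v := by
  classical
  set pe : H →ₗ[ℂ] ↥h.even := h.even.linearProjOfIsCompl h.odd h.compl with hpe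
  set po : H →ₗ[ℂ] ↥h.odd := h.odd.linearProjOfIsCompl h.even h.compl.symm with hpo
  -- the linear map defining the forward algebra hom
  set f : H →ₗ[ℂ] CliffordAlgebra Qlam :=
    (Algebra.linearMap ℂ (CliffordAlgebra Qlam)).comp (lam.comp (h.even.subtype.comp pe))
      + (CliffordAlgebra.ι Qlam).comp po with hf
  have f_even : ∀ x ∈ h.even, f x = algebraMap ℂ _ (lam x) := by
    intro x hx
    simp only [hf, LinearMap.add_apply, LinearMap.comp_apply, Algebra.linearMap_apply,
      Submodule.subtype_apply]
    rw [show pe x = ⟨x, hx⟩ from Submodule.projectionOnto_apply_left h.compl ⟨x, hx⟩,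
      show po x = 0 from Submodule.projectionOnto_apply_of_mem_right h.compl.symm hx]
    simp
  have f_odd : ∀ v : ↥h.odd, f (v : H) = CliffordAlgebra.ι Qlam v := by
    intro v
    simp only [hf, LinearMap.add_apply, LinearMap.comp_apply, Algebra.linearMap_apply,
      Submodule.subtype_apply]
    rw [show pe (v : H) = 0 from Submodule.projectionOnto_apply_of_mem_right h.compl v.2,
      show po (v : H) = v from Submodule.projectionOnto_apply_left h.compl.symm v]
    simp
  set F0 : TensorAlgebra ℂ H →ₐ[ℂ] CliffordAlgebra Qlam := TensorAlgebra.lift ℂ f with hF0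
  have hF0ι : ∀ x : H, F0 (TensorAlgebra.ι ℂ x) = f x := fun x => TensorAlgebra.lift_ι_apply f x
  have hrel : ∀ ⦃a b⦄, URel h lam a b → F0 a = F0 b := by
    intro a b hab
    induction hab with
    | comm x y hx =>
        simp only [map_mul, map_add, hF0ι, f_even x hx, quasitoral x hx y, map_zero, add_zero]
        exact Algebra.commutes _ _
    | anticomm x y hx hy =>
        simp only [map_mul, map_add, map_neg, hF0ι, f_odd ⟨x, hx⟩, f_odd ⟨y, hy⟩]
        have hb := f_even _ (h.oo_mem x hx y hy)
        rw [hb]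
        have := CliffordAlgebra.ι_mul_ι_add_swap (Q := Qlam) ⟨x, hx⟩ ⟨y, hy⟩
        rw [hQlam] at this
        rw [neg_add_eq_sub, eq_sub_iff_add_eq]
        exact this
    | central t ht =>
        rw [hF0ι, f_even t ht]
        simp
  set F : RingQuot (URel h lam) →ₐ[ℂ] CliffordAlgebra Qlam :=
    RingQuot.liftAlgHom ℂ ⟨F0, hrel⟩ with hF
  have hFmk : ∀ a, F (RingQuot.mkAlgHom ℂ (URel h lam) a) = F0 a := fun a =>
    RingQuot.liftAlgHom_mkAlgHom_apply ℂ F0 hrel a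
  -- backward map
  set g : ↥h.odd →ₗ[ℂ] RingQuot (URel h lam) :=
    (RingQuot.mkAlgHom ℂ (URel h lam)).toLinearMap.comp
      ((TensorAlgebra.ι ℂ).comp h.odd.subtype) with hg
  have hgapp : ∀ v : ↥h.odd,
      g v = RingQuot.mkAlgHom ℂ (URel h lam) (TensorAlgebra.ι ℂ (v : H)) := fun v => rfl
  have hgsq : ∀ v : ↥h.odd, g v * g v = algebraMap ℂ _ (Qlam v) := by
    intro v
    have h1 := RingQuot.mkAlgHom_rel ℂ (URel.anticomm (h := h) (lam := lam) (v : H) (v : H) v.2 v.2)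
    have h2 := RingQuot.mkAlgHom_rel ℂ (URel.central (h := h) (lam := lam)
      (h.bracket (v : H) (v : H)) (h.oo_mem _ v.2 _ v.2))
    simp only [map_mul, map_add, map_neg] at h1
    rw [h2] at h1
    have hQ : lam (h.bracket (v : H) (v : H)) = 2 * Qlam v := by
      rw [← hQlam v v, QuadraticMap.polar_self]
      simp [two_smul, two_mul]
    rw [hQ] at h1
    rw [← hgapp, AlgHom.commutes] at h1
    have : (2 : ℂ) • (g v * g v) = (2 : ℂ) • algebraMap ℂ _ (Qlam v) := by
      rw [two_smul, two_smul]
      calc g v * g v + g v * g v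
          = (-(g v * g v) + algebraMap ℂ _ (2 * Qlam v)) + g v * g v := by rw [← h1]
        _ = algebraMap ℂ _ (2 * Qlam v) := by abel
        _ = algebraMap ℂ _ (Qlam v) + algebraMap ℂ _ (Qlam v) := by
            rw [← map_add, two_mul]
    exact smul_right_injective (RingQuot (URel h lam)) two_ne_zero this
  set G : CliffordAlgebra Qlam →ₐ[ℂ] RingQuot (URel h lam) :=
    CliffordAlgebra.lift Qlam ⟨g, hgsq⟩ with hG
  have hGι : ∀ v : ↥h.odd, G (CliffordAlgebra.ι Qlam v) = g v := fun v => by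
    rw [hG, CliffordAlgebra.lift_ι_apply]
  have hFG : F.comp G = AlgHom.id ℂ _ := by
    apply CliffordAlgebra.hom_ext
    ext v
    simp only [AlgHom.comp_toLinearMap, LinearMap.comp_apply, AlgHom.toLinearMap_apply,
      AlgHom.id_apply, AlgHom.coe_id, id_eq]
    rw [hGι, hgapp, hFmk, hF0ι, f_odd]
  have hGF : G.comp F = AlgHom.id ℂ _ := by
    apply RingQuot.ringQuot_ext'
    apply TensorAlgebra.hom_ext
    ext x
    simp only [LinearMap.comp_apply, AlgHom.toLinearMap_apply, AlgHom.comp_apply,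
      AlgHom.id_apply]
    rw [hFmk, hF0ι]
    have hdecomp : x = ((pe x : H)) + ((po x : H)) :=
      (Submodule.projection_add_projection_eq_self h.compl x).symm
    have hcen := RingQuot.mkAlgHom_rel ℂ (URel.central (h := h) (lam := lam) (pe x : H) (pe x).2)
    calc G (f x)
        = G (algebraMap ℂ _ (lam (pe x : H)) + CliffordAlgebra.ι Qlam (po x)) := by
          simp only [hf, LinearMap.add_apply, LinearMap.comp_apply, Algebra.linearMap_apply,
            Submodule.subtype_apply, map_add]
      _ = algebraMap ℂ _ (lam (pe x : H))
            + RingQuot.mkAlgHom ℂ (URel h lam) (TensorAlgebra.ι ℂ ((po x : H))) := by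
          rw [map_add, AlgHom.commutes, hGι, hgapp]
      _ = RingQuot.mkAlgHom ℂ (URel h lam) (TensorAlgebra.ι ℂ x) := by
          rw [AlgHom.commutes] at hcen
          rw [← hcen, ← map_add, ← map_add]
          exact congrArg _ (congrArg _ hdecomp.symm)
  refine ⟨AlgEquiv.ofAlgHom F G hFG hGF, ?_⟩
  intro v
  show F _ = _
  rw [hFmk, hF0ι, f_odd]
end

section
/- Let g(A) = g̃(A)/r be the quotient by the maximal ideal intersecting h trivially. If x lies in the positive part n⁺ of g(A) and [g_{−α}, x] = 0 for every simple root α, then x = 0; similarly for y in n⁻ with [g_{α}, y] = 0 for all simple α. -/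
/-- A submodule is an ideal for the bracket `b` if it absorbs brackets on both sides. -/
def IsBracketIdeal {L : Type*} [AddCommGroup L] [Module ℂ L]
    (b : L →ₗ[ℂ] L →ₗ[ℂ] L) (I : Submodule ℂ L) : Prop :=
  ∀ a : L, ∀ v ∈ I, b a v ∈ I ∧ b v a ∈ I

/-- The subalgebra (smallest bracket-closed submodule) generated by a subspace `P`. -/
def lieSpan {L : Type*} [AddCommGroup L] [Module ℂ L]
    (b : L →ₗ[ℂ] L →ₗ[ℂ] L) (P : Submodule ℂ L) : Submodule ℂ L :=
  sInf {N | P ≤ N ∧ ∀ x ∈ N, ∀ y ∈ N, b x y ∈ N}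

/-- `adPow b S T k` is the span of `[S,[S,…,[S,T]…]]` (`k` brackets); used to express
the integrability condition `(ad 𝔤_α)^k 𝔤_β = 0`. -/
def adPow {L : Type*} [AddCommGroup L] [Module ℂ L]
    (b : L →ₗ[ℂ] L →ₗ[ℂ] L) (S T : Submodule ℂ L) : ℕ → Submodule ℂ L
  | 0 => T
  | k + 1 => Submodule.span ℂ {z | ∃ x ∈ S, ∃ w ∈ adPow b S T k, z = b x w}

/-- A **Cartan datum**, realized inside an ambient Lie superalgebra `L`:
a finite-dimensional quasi-toral subalgebra `𝔥 = hE ⊕ hO`, linearly independent simple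
roots `α_1,…,α_n ∈ 𝔱*` (`𝔱 = hE`, each `alpha i` recorded as a functional on `L` whose
restriction to `hE` is the weight), graded `𝔥`-submodules `𝔤_{±α_i} = gp i, gm i` which are
weight spaces of weight `±α_i`, with `[𝔤_{α_i}, 𝔤_{-α_i}] ⊆ 𝔥`, `[𝔤_{α_i}, 𝔤_{-α_j}] = 0`
for `i ≠ j`, and the pairing `𝔤_{α_i} ⊗ 𝔤_{-α_i} → 𝔥` nondegenerate. -/
structure CartanDatum (L : Type*) [AddCommGroup L] [Module ℂ L] where
  sl : SuperLie L
  hE : Submodule ℂ L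
  hO : Submodule ℂ L
  hE_le : hE ≤ sl.even
  hO_le : hO ≤ sl.odd
  hfd : FiniteDimensional ℂ ↥(hE ⊔ hO)
  quasitoral : ∀ t ∈ hE, ∀ z ∈ hE ⊔ hO, sl.bracket t z = 0
  brOO : ∀ a ∈ hO, ∀ b ∈ hO, sl.bracket a b ∈ hE
  n : ℕ
  alpha : Fin n → (L →ₗ[ℂ] ℂ)
  indep : LinearIndependent ℂ fun i => (alpha i).domRestrict hE
  gp : Fin n → Submodule ℂ L
  gm : Fin n → Submodule ℂ L
  gp_fd : ∀ i, FiniteDimensional ℂ ↥(gp i)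
  gm_fd : ∀ i, FiniteDimensional ℂ ↥(gm i)
  gp_graded : ∀ i, gp i = (gp i ⊓ sl.even) ⊔ (gp i ⊓ sl.odd)
  gm_graded : ∀ i, gm i = (gm i ⊓ sl.even) ⊔ (gm i ⊓ sl.odd)
  gp_wt : ∀ i, ∀ t ∈ hE, ∀ v ∈ gp i, sl.bracket t v = alpha i t • v
  gm_wt : ∀ i, ∀ t ∈ hE, ∀ v ∈ gm i, sl.bracket t v = -(alpha i t) • v
  gp_mod : ∀ i, ∀ t ∈ hE ⊔ hO, ∀ v ∈ gp i, sl.bracket t v ∈ gp i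
  gm_mod : ∀ i, ∀ t ∈ hE ⊔ hO, ∀ v ∈ gm i, sl.bracket t v ∈ gm i
  pair_mem : ∀ i, ∀ x ∈ gp i, ∀ y ∈ gm i, sl.bracket x y ∈ hE ⊔ hO
  pair_ne : ∀ i j, i ≠ j → ∀ x ∈ gp i, ∀ y ∈ gm j, sl.bracket x y = 0
  nondeg_p : ∀ i, ∀ U : Submodule ℂ L, U ≤ gp i → U ≠ ⊥ →
    (∀ t ∈ hE ⊔ hO, ∀ u ∈ U, sl.bracket t u ∈ U) →
    ∃ u ∈ U, ∃ v ∈ gm i, sl.bracket u v ≠ 0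
  nondeg_m : ∀ i, ∀ U : Submodule ℂ L, U ≤ gm i → U ≠ ⊥ →
    (∀ t ∈ hE ⊔ hO, ∀ u ∈ U, sl.bracket t u ∈ U) →
    ∃ u ∈ U, ∃ v ∈ gp i, sl.bracket v u ≠ 0

namespace CartanDatum

variable {L : Type*} [AddCommGroup L] [Module ℂ L] (D : CartanDatum L)

/-- The Cartan subalgebra `𝔥`. -/
def h : Submodule ℂ L := D.hE ⊔ D.hO

/-- The generating subspace `𝒞 = ⊕ᵢ 𝔤_{-α_i} ⊕ 𝔥 ⊕ ⊕ᵢ 𝔤_{α_i}`. -/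
def genC : Submodule ℂ L := D.h ⊔ ((⨆ i, D.gp i) ⊔ (⨆ i, D.gm i))

/-- The positive part `𝔫⁺`: the subalgebra generated by the `𝔤_{α_i}`. -/
def Np : Submodule ℂ L := lieSpan D.sl.bracket (⨆ i, D.gp i)

/-- The negative part `𝔫⁻`. -/
def Nm : Submodule ℂ L := lieSpan D.sl.bracket (⨆ i, D.gm i)

/-- The coroot space `𝔥_{α_i} = [𝔤_{α_i}, 𝔤_{-α_i}]`. -/
def coroot (i : Fin D.n) : Submodule ℂ L :=
  Submodule.span ℂ {z | ∃ x ∈ D.gp i, ∃ y ∈ D.gm i, z = D.sl.bracket x y}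

/-- `D.Presented` says the ambient algebra *is* `𝔤̃(𝒜)`: it satisfies the universal
property of the presentation with generators `𝒞` and the defining relations.  Any
linear map to a Lie superalgebra `M` which respects, on `𝒞`, the parity, the bracket of
`𝔥`, the `𝔥`-module structure of the `𝔤_{±α_i}`, the pairings `[𝔤_{α_i}, 𝔤_{-α_i}]`, and
kills the mixed pairings, extends uniquely to a morphism of Lie superalgebras. -/
def Presented : Prop :=
  ∀ (M : Type*) [AddCommGroup M] [Module ℂ M] (sM : SuperLie M) (f : L →ₗ[ℂ] M),
    (∀ a ∈ D.h, ∀ b ∈ D.h, f (D.sl.bracket a b) = sM.bracket (f a) (f b)) →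
    (∀ i, ∀ t ∈ D.h, ∀ v ∈ D.gp i, f (D.sl.bracket t v) = sM.bracket (f t) (f v)) →
    (∀ i, ∀ t ∈ D.h, ∀ v ∈ D.gm i, f (D.sl.bracket t v) = sM.bracket (f t) (f v)) →
    (∀ i, ∀ x ∈ D.gp i, ∀ y ∈ D.gm i, f (D.sl.bracket x y) = sM.bracket (f x) (f y)) →
    (∀ i j, i ≠ j → ∀ x ∈ D.gp i, ∀ y ∈ D.gm j, sM.bracket (f x) (f y) = 0) →
    (∀ v ∈ D.genC, v ∈ D.sl.even → f v ∈ sM.even) →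
    (∀ v ∈ D.genC, v ∈ D.sl.odd → f v ∈ sM.odd) →
    ∃! F : L →ₗ[ℂ] M,
      (∀ a b : L, F (D.sl.bracket a b) = sM.bracket (F a) (F b)) ∧
      (∀ v ∈ D.sl.even, F v ∈ sM.even) ∧ (∀ v ∈ D.sl.odd, F v ∈ sM.odd) ∧
      (∀ v ∈ D.genC, F v = f v)

/-- `D.Reduced` says the ambient algebra *is* `𝔤(𝒜) = 𝔤̃(𝒜)/𝔯`: it has no nonzero
ideal intersecting `𝔥` trivially. -/
def Reduced : Prop :=
  ∀ I : Submodule ℂ L, IsBracketIdeal D.sl.bracket I → I ⊓ D.h = ⊥ → I = ⊥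

/-- The triangular decomposition property `𝔤 = 𝔫⁻ ⊕ 𝔥 ⊕ 𝔫⁺` (as a sum). -/
def Triangular : Prop := D.Nm ⊔ (D.h ⊔ D.Np) = ⊤

end CartanDatum
section SuperHelpers

variable {L : Type*} [AddCommGroup L] [Module ℂ L] (sl : SuperLie L)

/-- homogeneous element -/
def SuperLie.Homog (a : L) : Prop := a ∈ sl.even ∨ a ∈ sl.odd

/-- stabilizer of a submodule under left bracket -/
def SuperLie.Stab (T : Submodule ℂ L) : Submodule ℂ L where
  carrier := {a | ∀ v ∈ T, sl.bracket a v ∈ T}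
  zero_mem' := by
    intro v hv
    simp only [map_zero, LinearMap.zero_apply]
    exact T.zero_mem
  add_mem' := by
    intro a b ha hb v hv
    rw [map_add, LinearMap.add_apply]
    exact T.add_mem (ha v hv) (hb v hv)
  smul_mem' := by
    intro c a ha v hv
    rw [map_smul, LinearMap.smul_apply]
    exact T.smul_mem c (ha v hv)

lemma SuperLie.mem_Stab {T : Submodule ℂ L} {a : L} :
    a ∈ sl.Stab T ↔ ∀ v ∈ T, sl.bracket a v ∈ T := Iff.rfl

def SuperLie.Grd (S : Submodule ℂ L) : Submodule ℂ L := (S ⊓ sl.even) ⊔ (S ⊓ sl.odd)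

lemma SuperLie.Grd_le (S : Submodule ℂ L) : sl.Grd S ≤ S :=
  sup_le inf_le_left inf_le_left

lemma SuperLie.Grd_mono {S S' : Submodule ℂ L} (h : S ≤ S') : sl.Grd S ≤ sl.Grd S' :=
  sup_le_sup (inf_le_inf h le_rfl) (inf_le_inf h le_rfl)

lemma SuperLie.graded_le_Grd {A B : Submodule ℂ L}
    (hA : A = (A ⊓ sl.even) ⊔ (A ⊓ sl.odd)) (h : A ≤ B) : A ≤ sl.Grd B := by
  conv_lhs => rw [hA]
  exact sup_le_sup (inf_le_inf h le_rfl) (inf_le_inf h le_rfl)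

lemma SuperLie.skew {x y : L} (hx : sl.Homog x) (hy : sl.Homog y) :
    sl.bracket x y = sl.bracket y x ∨ sl.bracket x y = - sl.bracket y x := by
  rcases hx with hx | hx
  · exact Or.inr (sl.skew_e x hx y)
  · rcases hy with hy | hy
    · right; rw [sl.skew_e y hy x, neg_neg]
    · exact Or.inl (sl.symm_oo x hx y hy)

lemma SuperLie.skew_mem {N : Submodule ℂ L} {x y : L} (hx : sl.Homog x) (hy : sl.Homog y)
    (h : sl.bracket y x ∈ N) : sl.bracket x y ∈ N := by
  rcases sl.skew hx hy with e | e
  · rw [e]; exact h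
  · rw [e]; exact N.neg_mem h

lemma SuperLie.jac_bra_mem {N : Submodule ℂ L} {x y : L} (hx : sl.Homog x) (hy : sl.Homog y)
    (z : L) (h1 : sl.bracket x (sl.bracket y z) ∈ N) (h2 : sl.bracket y (sl.bracket x z) ∈ N) :
    sl.bracket (sl.bracket x y) z ∈ N := by
  rcases hx with hx | hx
  · have e := sl.jacobi_e x hx y z
    have e2 : sl.bracket (sl.bracket x y) z
        = sl.bracket x (sl.bracket y z) - sl.bracket y (sl.bracket x z) := by rw [e]; abel
    rw [e2]; exact N.sub_mem h1 h2
  · rcases hy with hy | hy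
    · have e := sl.jacobi_oe x hx y hy z
      have e2 : sl.bracket (sl.bracket x y) z
          = sl.bracket x (sl.bracket y z) - sl.bracket y (sl.bracket x z) := by rw [e]; abel
      rw [e2]; exact N.sub_mem h1 h2
    · have e := sl.jacobi_oo x hx y hy z
      have e2 : sl.bracket (sl.bracket x y) z
          = sl.bracket x (sl.bracket y z) + sl.bracket y (sl.bracket x z) := by rw [e]; abel
      rw [e2]; exact N.add_mem h1 h2

lemma SuperLie.jac_rot_mem {N : Submodule ℂ L} {x y : L} (hx : sl.Homog x) (hy : sl.Homog y)
    (z : L) (h1 : sl.bracket (sl.bracket x y) z ∈ N) (h2 : sl.bracket y (sl.bracket x z) ∈ N) :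
    sl.bracket x (sl.bracket y z) ∈ N := by
  rcases hx with hx | hx
  · rw [sl.jacobi_e x hx y z]; exact N.add_mem h1 h2
  · rcases hy with hy | hy
    · rw [sl.jacobi_oe x hx y hy z]; exact N.add_mem h1 h2
    · rw [sl.jacobi_oo x hx y hy z]; exact N.sub_mem h1 h2

lemma SuperLie.grd_closed {S : Submodule ℂ L}
    (h : ∀ x ∈ S, ∀ y ∈ S, sl.Homog x → sl.Homog y → sl.bracket x y ∈ S) :
    ∀ x ∈ sl.Grd S, ∀ y ∈ sl.Grd S, sl.bracket x y ∈ sl.Grd S := by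
  intro x hx y hy
  obtain ⟨xe, hxe, xo, hxo, rfl⟩ := Submodule.mem_sup.mp hx
  obtain ⟨ye, hye, yo, hyo, rfl⟩ := Submodule.mem_sup.mp hy
  obtain ⟨hxe1, hxe2⟩ := Submodule.mem_inf.mp hxe
  obtain ⟨hxo1, hxo2⟩ := Submodule.mem_inf.mp hxo
  obtain ⟨hye1, hye2⟩ := Submodule.mem_inf.mp hye
  obtain ⟨hyo1, hyo2⟩ := Submodule.mem_inf.mp hyo
  have expand : sl.bracket (xe + xo) (ye + yo)
      = sl.bracket xe ye + sl.bracket xe yo + (sl.bracket xo ye + sl.bracket xo yo) := by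
    simp only [map_add, LinearMap.add_apply]; abel
  rw [expand]
  refine add_mem (add_mem ?_ ?_) (add_mem ?_ ?_)
  · exact Submodule.mem_sup_left (Submodule.mem_inf.mpr
      ⟨h _ hxe1 _ hye1 (Or.inl hxe2) (Or.inl hye2), sl.ee_mem _ hxe2 _ hye2⟩)
  · exact Submodule.mem_sup_right (Submodule.mem_inf.mpr
      ⟨h _ hxe1 _ hyo1 (Or.inl hxe2) (Or.inr hyo2), sl.eo_mem _ hxe2 _ hyo2⟩)
  · exact Submodule.mem_sup_right (Submodule.mem_inf.mpr
      ⟨h _ hxo1 _ hye1 (Or.inr hxo2) (Or.inl hye2), sl.oe_mem _ hxo2 _ hye2⟩)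
  · exact Submodule.mem_sup_left (Submodule.mem_inf.mpr
      ⟨h _ hxo1 _ hyo1 (Or.inr hxo2) (Or.inr hyo2), sl.oo_mem _ hxo2 _ hyo2⟩)

lemma SuperLie.stab_bracket {T : Submodule ℂ L} {x y : L} (hx : x ∈ sl.Stab T)
    (hy : y ∈ sl.Stab T) (hhx : sl.Homog x) (hhy : sl.Homog y) :
    sl.bracket x y ∈ sl.Stab T := by
  rw [sl.mem_Stab] at hx hy ⊢
  intro v hv
  exact sl.jac_bra_mem hhx hhy v (hx _ (hy v hv)) (hy _ (hx v hv))

lemma SuperLie.grd_stab_closed (T : Submodule ℂ L) :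
    ∀ x ∈ sl.Grd (sl.Stab T), ∀ y ∈ sl.Grd (sl.Stab T), sl.bracket x y ∈ sl.Grd (sl.Stab T) :=
  sl.grd_closed fun _ hx _ hy hhx hhy => sl.stab_bracket hx hy hhx hhy

lemma SuperLie.flip_pair {N A B : Submodule ℂ L}
    (hA : A = (A ⊓ sl.even) ⊔ (A ⊓ sl.odd)) (hB : B = (B ⊓ sl.even) ⊔ (B ⊓ sl.odd))
    (h : ∀ a ∈ A, ∀ c ∈ B, sl.bracket a c ∈ N) :
    ∀ c ∈ B, ∀ a ∈ A, sl.bracket c a ∈ N := by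
  intro c hc a ha
  rw [hB] at hc; rw [hA] at ha
  obtain ⟨ce, hce, co, hco, rfl⟩ := Submodule.mem_sup.mp hc
  obtain ⟨ae, hae, ao, hao, rfl⟩ := Submodule.mem_sup.mp ha
  obtain ⟨hce1, hce2⟩ := Submodule.mem_inf.mp hce
  obtain ⟨hco1, hco2⟩ := Submodule.mem_inf.mp hco
  obtain ⟨hae1, hae2⟩ := Submodule.mem_inf.mp hae
  obtain ⟨hao1, hao2⟩ := Submodule.mem_inf.mp hao
  have expand : sl.bracket (ce + co) (ae + ao)
      = sl.bracket ce ae + sl.bracket ce ao + (sl.bracket co ae + sl.bracket co ao) := by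
    simp only [map_add, LinearMap.add_apply]; abel
  rw [expand]
  refine add_mem (add_mem ?_ ?_) (add_mem ?_ ?_)
  · exact sl.skew_mem (Or.inl hce2) (Or.inl hae2) (h _ hae1 _ hce1)
  · exact sl.skew_mem (Or.inl hce2) (Or.inr hao2) (h _ hao1 _ hce1)
  · exact sl.skew_mem (Or.inr hco2) (Or.inl hae2) (h _ hae1 _ hco1)
  · exact sl.skew_mem (Or.inr hco2) (Or.inr hao2) (h _ hao1 _ hco1)

end SuperHelpers

section LieSpanHelpers

variable {L : Type*} [AddCommGroup L] [Module ℂ L]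

lemma lieSpan_le' {bb : L →ₗ[ℂ] L →ₗ[ℂ] L} {P N : Submodule ℂ L} (h1 : P ≤ N)
    (h2 : ∀ x ∈ N, ∀ y ∈ N, bb x y ∈ N) : lieSpan bb P ≤ N := sInf_le ⟨h1, h2⟩

lemma le_lieSpan' {bb : L →ₗ[ℂ] L →ₗ[ℂ] L} {P : Submodule ℂ L} : P ≤ lieSpan bb P :=
  le_sInf fun _ hN => hN.1

lemma lieSpan_closed' {bb : L →ₗ[ℂ] L →ₗ[ℂ] L} {P : Submodule ℂ L} :
    ∀ x ∈ lieSpan bb P, ∀ y ∈ lieSpan bb P, bb x y ∈ lieSpan bb P := by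
  intro x hx y hy
  rw [lieSpan, Submodule.mem_sInf] at hx hy ⊢
  intro N hN
  exact hN.2 x (hx N hN) y (hy N hN)

end LieSpanHelpers

section SplitHelper
variable {L : Type*} [AddCommGroup L] [Module ℂ L] (sl : SuperLie L)

lemma SuperLie.split_zero {u v : L} (hu : u ∈ sl.even) (hv : v ∈ sl.odd) (h : u + v = 0) :
    u = 0 ∧ v = 0 := by
  have h1 : u = -v := eq_neg_of_add_eq_zero_left h
  have h2 : u ∈ sl.odd := h1 ▸ sl.odd.neg_mem hv
  have hu0 : u = 0 := (Submodule.disjoint_def.mp sl.compl.disjoint) u hu h2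
  refine ⟨hu0, ?_⟩
  rw [hu0] at h
  simpa using h

end SplitHelper
section WeightHelpers

variable {L : Type*} [AddCommGroup L] [Module ℂ L]

/-- The weight `∑ cᵢ αᵢ` as a functional. -/
noncomputable def wSum {n : ℕ} (w : Fin n → (L →ₗ[ℂ] ℂ)) (c : Fin n → ℕ) : L →ₗ[ℂ] ℂ :=
  ∑ i, (c i : ℂ) • w i

lemma wSum_apply {n : ℕ} (w : Fin n → (L →ₗ[ℂ] ℂ)) (c : Fin n → ℕ) (t : L) :
    wSum w c t = ∑ i, (c i : ℂ) * w i t := by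
  simp [wSum]

lemma wSum_add {n : ℕ} (w : Fin n → (L →ₗ[ℂ] ℂ)) (c c' : Fin n → ℕ) (t : L) :
    wSum w (c + c') t = wSum w c t + wSum w c' t := by
  simp [wSum_apply, Pi.add_apply, Nat.cast_add, add_mul, Finset.sum_add_distrib]

/-- Weight space for a functional `f`, relative to `hE`. -/
noncomputable def wSpace (sl : SuperLie L) (hE : Submodule ℂ L) (f : L →ₗ[ℂ] ℂ) : Submodule ℂ L where
  carrier := {v | ∀ t ∈ hE, sl.bracket t v = f t • v}
  zero_mem' := by intro t ht; simp
  add_mem' := by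
    intro a b ha hb t ht
    rw [map_add, ha t ht, hb t ht, smul_add]
  smul_mem' := by
    intro c a ha t ht
    rw [map_smul, ha t ht, smul_comm]

lemma mem_wSpace {sl : SuperLie L} {hE : Submodule ℂ L} {f : L →ₗ[ℂ] ℂ} {v : L} :
    v ∈ wSpace sl hE f ↔ ∀ t ∈ hE, sl.bracket t v = f t • v := Iff.rfl

lemma avoid_lemma {V ι : Type*} [AddCommGroup V] [Module ℂ V] (s : Finset ι)
    (γ : ι → V →ₗ[ℂ] ℂ) (h : ∀ j ∈ s, γ j ≠ 0) : ∃ t : V, ∀ j ∈ s, γ j t ≠ 0 := by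
  classical
  induction s using Finset.induction_on with
  | empty => exact ⟨0, by simp⟩
  | @insert a s ha ih =>
    obtain ⟨t, ht⟩ := ih fun j hj => h j (Finset.mem_insert_of_mem hj)
    have hγa : γ a ≠ 0 := h a (Finset.mem_insert_self a s)
    obtain ⟨t', ht'⟩ : ∃ t', γ a t' ≠ 0 := by
      by_contra hc
      push_neg at hc
      exact hγa (LinearMap.ext fun v => hc v)
    obtain ⟨c, hc⟩ := Infinite.exists_notMem_finset
      ((insert a s).image fun k => -(γ k t) / (γ k t'))
    refine ⟨t + c • t', fun j hj => ?_⟩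
    have happ : γ j (t + c • t') = γ j t + c * γ j t' := by
      simp [map_add, map_smul, smul_eq_mul]
    rw [happ]
    by_cases h0 : γ j t' = 0
    · rw [h0, mul_zero, add_zero]
      rcases Finset.mem_insert.mp hj with rfl | hj'
      · exact absurd h0 ht'
      · exact ht j hj'
    · intro hEq
      apply hc
      refine Finset.mem_image.mpr ⟨j, hj, ?_⟩
      rw [div_eq_iff h0]
      linear_combination -hEq
  
lemma sep_lemma {V ι : Type*} [AddCommGroup V] [Module ℂ V] (s : Finset ι)
    (γ : ι → V →ₗ[ℂ] ℂ) (h : ∀ c ∈ s, ∀ c' ∈ s, c ≠ c' → γ c ≠ γ c') :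
    ∃ t : V, ∀ c ∈ s, ∀ c' ∈ s, c ≠ c' → γ c t ≠ γ c' t := by
  classical
  have hnz : ∀ p ∈ (s ×ˢ s).filter fun p => p.1 ≠ p.2, γ p.1 - γ p.2 ≠ 0 := by
    intro p hp
    obtain ⟨hps, hne⟩ := Finset.mem_filter.mp hp
    obtain ⟨h1, h2⟩ := Finset.mem_product.mp hps
    exact sub_ne_zero_of_ne (h p.1 h1 p.2 h2 hne)
  obtain ⟨t, ht⟩ := avoid_lemma ((s ×ˢ s).filter fun p => p.1 ≠ p.2)
    (fun p => γ p.1 - γ p.2) hnz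
  refine ⟨t, fun c hc c' hc' hne => ?_⟩
  have := ht (c, c') (Finset.mem_filter.mpr ⟨Finset.mem_product.mpr ⟨hc, hc'⟩, hne⟩)
  simpa [sub_ne_zero] using this

lemma eig_lemma {ι : Type*} (f : L →ₗ[ℂ] L) (μ : ι → ℂ) (s : Finset ι) :
    ∀ v : ι → L, (∀ c ∈ s, ∀ c' ∈ s, c ≠ c' → μ c ≠ μ c') →
      (∀ c ∈ s, f (v c) = μ c • v c) → (∑ c ∈ s, v c = 0) → ∀ c ∈ s, v c = 0 := by
  classical
  induction s using Finset.induction_on with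
  | empty => intro v _ _ _ c hc; simp at hc
  | @insert a s ha ih =>
    intro v hμ hv hsum
    have hsum' : v a + ∑ c ∈ s, v c = 0 := by rwa [Finset.sum_insert ha] at hsum
    have happ : ∑ c ∈ s, (μ c - μ a) • v c = 0 := by
      have h1 := congrArg f hsum'
      rw [map_add, map_sum, map_zero] at h1
      have hs1 : ∑ c ∈ s, f (v c) = ∑ c ∈ s, μ c • v c :=
        Finset.sum_congr rfl fun c hc => hv c (Finset.mem_insert_of_mem hc)
      rw [hs1, hv a (Finset.mem_insert_self a s)] at h1
      have h3 : μ a • v a + ∑ c ∈ s, μ a • v c = 0 := by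
        rw [← Finset.smul_sum, ← smul_add, hsum', smul_zero]
      have h4 := sub_eq_zero_of_eq (h1.trans h3.symm)
      simpa [sub_smul, Finset.sum_sub_distrib, add_sub_add_left_eq_sub] using h4
    have hvz : ∀ c ∈ s, v c = 0 := by
      intro c hc
      have h5 := ih (fun c => (μ c - μ a) • v c)
        (fun c hc c' hc' hne => hμ c (Finset.mem_insert_of_mem hc) c'
          (Finset.mem_insert_of_mem hc') hne)
        (fun c hc => by rw [map_smul, hv c (Finset.mem_insert_of_mem hc), smul_comm])
        happ c hc
      have hne : μ c - μ a ≠ 0 := sub_ne_zero_of_ne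
        (hμ c (Finset.mem_insert_of_mem hc) a (Finset.mem_insert_self a s)
          fun h => ha (h ▸ hc))
      exact (smul_eq_zero.mp h5).resolve_left hne
    intro c hc
    rcases Finset.mem_insert.mp hc with rfl | hc'
    · have : ∑ c ∈ s, v c = 0 := Finset.sum_eq_zero hvz
      rw [this, add_zero] at hsum'
      exact hsum'
    · exact hvz c hc'

end WeightHelpers
section MainAux

theorem main_aux {L : Type} [AddCommGroup L] [Module ℂ L] (sl : SuperLie L)
    (hE hO : Submodule ℂ L) (hEe : hE ≤ sl.even) (hOo : hO ≤ sl.odd)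
    (hqt : ∀ t ∈ hE, ∀ z ∈ hE ⊔ hO, sl.bracket t z = 0)
    {n : ℕ} (w : Fin n → (L →ₗ[ℂ] ℂ))
    (hindep : LinearIndependent ℂ fun i => (w i).domRestrict hE)
    (P Q : Fin n → Submodule ℂ L)
    (Pg : ∀ i, P i = (P i ⊓ sl.even) ⊔ (P i ⊓ sl.odd))
    (Qg : ∀ i, Q i = (Q i ⊓ sl.even) ⊔ (Q i ⊓ sl.odd))
    (Pwt : ∀ i, ∀ t ∈ hE, ∀ v ∈ P i, sl.bracket t v = w i t • v)
    (Pmod : ∀ i, ∀ t ∈ hE ⊔ hO, ∀ v ∈ P i, sl.bracket t v ∈ P i)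
    (Qmod : ∀ i, ∀ t ∈ hE ⊔ hO, ∀ v ∈ Q i, sl.bracket t v ∈ Q i)
    (pairQP : ∀ i, ∀ q ∈ Q i, ∀ p ∈ P i, sl.bracket q p ∈ hE ⊔ hO)
    (pairQPne : ∀ i j, i ≠ j → ∀ q ∈ Q i, ∀ p ∈ P j, sl.bracket q p = 0)
    (hred : ∀ I : Submodule ℂ L, IsBracketIdeal sl.bracket I → I ⊓ (hE ⊔ hO) = ⊥ → I = ⊥)
    (htri : lieSpan sl.bracket (⨆ i, Q i) ⊔ ((hE ⊔ hO) ⊔ lieSpan sl.bracket (⨆ i, P i)) = ⊤) :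
    ∀ x ∈ lieSpan sl.bracket (⨆ i, P i), (∀ i, ∀ q ∈ Q i, sl.bracket q x = 0) → x = 0 := by
  classical
  have hPle : ∀ i, P i ≤ lieSpan sl.bracket (⨆ i, P i) :=
    fun i => le_trans (le_iSup P i) le_lieSpan'
  have hNPc : ∀ x ∈ lieSpan sl.bracket (⨆ i, P i), ∀ y ∈ lieSpan sl.bracket (⨆ i, P i),
      sl.bracket x y ∈ lieSpan sl.bracket (⨆ i, P i) := lieSpan_closed'
  have hNPg : lieSpan sl.bracket (⨆ i, P i) ≤ sl.Grd (lieSpan sl.bracket (⨆ i, P i)) := by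
    apply lieSpan_le'
    · exact iSup_le fun i => sl.graded_le_Grd (Pg i) (hPle i)
    · exact sl.grd_closed fun x hx y hy _ _ => hNPc x hx y hy
  -- stability of NP under bracketing by homogeneous elements of h
  have hstab1 : ∀ t, sl.Homog t → t ∈ hE ⊔ hO →
      ∀ v ∈ lieSpan sl.bracket (⨆ i, P i), sl.bracket t v ∈ lieSpan sl.bracket (⨆ i, P i) := by
    intro t hth htH
    have key : lieSpan sl.bracket (⨆ i, P i) ≤
        lieSpan sl.bracket (⨆ i, P i) ⊓ Submodule.comap (sl.bracket t)
          (lieSpan sl.bracket (⨆ i, P i)) := by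
      refine le_trans ?_ (sl.Grd_le _)
      apply lieSpan_le'
      · refine iSup_le fun i => sl.graded_le_Grd (Pg i) (le_inf (hPle i) ?_)
        intro v hv
        exact Submodule.mem_comap.mpr (hPle i (Pmod i t htH v hv))
      · apply sl.grd_closed
        intro x hx y hy hhx hhy
        obtain ⟨hx1, hx2⟩ := Submodule.mem_inf.mp hx
        obtain ⟨hy1, hy2⟩ := Submodule.mem_inf.mp hy
        rw [Submodule.mem_comap] at hx2 hy2
        refine Submodule.mem_inf.mpr ⟨hNPc x hx1 y hy1, Submodule.mem_comap.mpr ?_⟩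
        exact sl.jac_rot_mem hth hhx y (hNPc _ hx2 y hy1) (hNPc x hx1 _ hy2)
    intro v hv
    exact Submodule.mem_comap.mp (Submodule.mem_inf.mp (key hv)).2
  have hstabH : ∀ t ∈ hE ⊔ hO, ∀ v ∈ lieSpan sl.bracket (⨆ i, P i),
      sl.bracket t v ∈ lieSpan sl.bracket (⨆ i, P i) := by
    intro t ht v hv
    obtain ⟨t1, ht1, t2, ht2, rfl⟩ := Submodule.mem_sup.mp ht
    have e : sl.bracket (t1 + t2) v = sl.bracket t1 v + sl.bracket t2 v := by
      simp [map_add, LinearMap.add_apply]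
    rw [e]
    exact add_mem (hstab1 t1 (Or.inl (hEe ht1)) (Submodule.mem_sup_left ht1) v hv)
      (hstab1 t2 (Or.inr (hOo ht2)) (Submodule.mem_sup_right ht2) v hv)
  have hstabHNP : ∀ a ∈ (hE ⊔ hO) ⊔ lieSpan sl.bracket (⨆ i, P i),
      ∀ v ∈ lieSpan sl.bracket (⨆ i, P i),
      sl.bracket a v ∈ lieSpan sl.bracket (⨆ i, P i) := by
    intro a ha v hv
    obtain ⟨a1, ha1, a2, ha2, rfl⟩ := Submodule.mem_sup.mp ha
    have e : sl.bracket (a1 + a2) v = sl.bracket a1 v + sl.bracket a2 v := by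
      simp [map_add, LinearMap.add_apply]
    rw [e]
    exact add_mem (hstabH a1 ha1 v hv) (hNPc a2 ha2 v hv)
  -- NP intersects h trivially (weight argument)
  have hNPH : ∀ v ∈ lieSpan sl.bracket (⨆ i, P i), v ∈ hE ⊔ hO → v = 0 := by
    intro v hvNP hvH
    set WW : (Fin n → ℕ) → Submodule ℂ L :=
      fun c => if c = 0 then ⊥ else wSpace sl hE (wSum w c) with hWW
    have hWmem : ∀ {c : Fin n → ℕ}, c ≠ 0 → WW c = wSpace sl hE (wSum w c) := by
      intro c hc
      rw [hWW]
      simp only [if_neg hc]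
    have hWWc : ∀ c c', ∀ u ∈ WW c, ∀ y ∈ WW c', sl.bracket u y ∈ ⨆ c, WW c := by
      intro c c' u hu y hy
      by_cases hc : c = 0
      · subst hc
        have hu0 : u = 0 := by
          rw [hWW] at hu
          simpa using hu
        subst hu0
        have e : sl.bracket (0 : L) y = 0 := by simp
        rw [e]
        exact Submodule.zero_mem _
      · by_cases hc' : c' = 0
        · subst hc'
          have hy0 : y = 0 := by
            rw [hWW] at hy
            simpa using hy
          subst hy0
          rw [map_zero]
          exact Submodule.zero_mem _
        · rw [hWmem hc] at hu
          rw [hWmem hc'] at hy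
          have hkey : sl.bracket u y ∈ wSpace sl hE (wSum w (c + c')) := by
            refine mem_wSpace.mpr fun t ht => ?_
            rw [sl.jacobi_e t (hEe ht) u y, mem_wSpace.mp hu t ht, mem_wSpace.mp hy t ht,
              map_smul, LinearMap.smul_apply, (sl.bracket u).map_smul, ← add_smul, ← wSum_add]
          have hne : c + c' ≠ 0 := by
            intro h
            apply hc
            funext i
            have := congrFun h i
            simpa using (Nat.add_eq_zero.mp this).1
          refine Submodule.mem_iSup_of_mem (c + c') ?_
          rw [hWmem hne]
          exact hkey
    have hWle : lieSpan sl.bracket (⨆ i, P i) ≤ ⨆ c, WW c := by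
      apply lieSpan_le'
      · refine iSup_le fun i => le_trans ?_ (le_iSup WW (Pi.single i 1))
        have hne : (Pi.single i 1 : Fin n → ℕ) ≠ 0 := by
          intro h0
          have := congrFun h0 i
          simp at this
        rw [hWmem hne]
        intro p hp
        refine mem_wSpace.mpr fun t ht => ?_
        rw [Pwt i t ht p hp]
        congr 1
        rw [wSum_apply, Finset.sum_eq_single i]
        · simp
        · intro j _ hj
          simp [Pi.single_eq_of_ne hj]
        · intro hi
          exact absurd (Finset.mem_univ i) hi
      · intro u hu y hy
        refine Submodule.iSup_induction WW
          (motive := fun u => sl.bracket u y ∈ ⨆ c, WW c) hu ?_ ?_ ?_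
        · intro c u' hu'
          refine Submodule.iSup_induction WW
            (motive := fun y => sl.bracket u' y ∈ ⨆ c, WW c) hy ?_ ?_ ?_
          · intro c' y' hy'
            exact hWWc c c' u' hu' y' hy'
          · show sl.bracket u' (0 : L) ∈ ⨆ c, WW c
            rw [map_zero]
            exact Submodule.zero_mem _
          · intro y1 y2 h1 h2
            show sl.bracket u' (y1 + y2) ∈ ⨆ c, WW c
            rw [map_add]
            exact add_mem h1 h2
        · show sl.bracket (0 : L) y ∈ ⨆ c, WW c
          have e : sl.bracket (0 : L) y = 0 := by simp
          rw [e]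
          exact Submodule.zero_mem _
        · intro u1 u2 h1 h2
          show sl.bracket (u1 + u2) y ∈ ⨆ c, WW c
          have e : sl.bracket (u1 + u2) y = sl.bracket u1 y + sl.bracket u2 y := by
            simp [map_add, LinearMap.add_apply]
          rw [e]
          exact add_mem (h1 : sl.bracket u1 y ∈ _) h2
    obtain ⟨f, hf, hfsum⟩ := (Submodule.mem_iSup_iff_exists_finsupp WW v).mp (hWle hvNP)
    have h0supp : (0 : Fin n → ℕ) ∉ f.support := by
      intro h0
      have hm := hf 0
      rw [hWW] at hm
      simp only [if_pos rfl, Submodule.mem_bot] at hm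
      exact (Finsupp.mem_support_iff.mp h0) hm
    have hdist : ∀ c c' : Fin n → ℕ, c ≠ c' →
        (wSum w c).domRestrict hE ≠ (wSum w c').domRestrict hE := by
      intro c c' hne hEq
      apply hne
      have hrestr : ∀ c : Fin n → ℕ, (wSum w c).domRestrict hE
          = ∑ i, (c i : ℂ) • (w i).domRestrict hE := by
        intro c
        ext t
        simp [wSum_apply, LinearMap.domRestrict_apply]
      have hz := Fintype.linearIndependent_iff.mp hindep (fun i => (c i : ℂ) - (c' i : ℂ)) ?_
      · funext i
        have h2 : (c i : ℂ) = (c' i : ℂ) := by linear_combination hz i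
        exact_mod_cast h2
      · simp only [sub_smul]
        rw [Finset.sum_sub_distrib, ← hrestr c, ← hrestr c', hEq, sub_self]
    obtain ⟨t, htsep⟩ := sep_lemma (insert 0 f.support)
      (fun c => (wSum w c).domRestrict hE) (fun c _ c' _ hne => hdist c c' hne)
    set vv : (Fin n → ℕ) → L := fun c => if c = 0 then -v else f c with hvv
    have hsum0 : ∑ c ∈ insert 0 f.support, vv c = 0 := by
      rw [Finset.sum_insert h0supp]
      have e1 : vv 0 = -v := by rw [hvv]; simp
      have e2 : ∑ c ∈ f.support, vv c = ∑ c ∈ f.support, f c := by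
        refine Finset.sum_congr rfl fun c hc => ?_
        have hc0 : c ≠ 0 := fun h => h0supp (h ▸ hc)
        rw [hvv]
        simp [hc0]
      have e3 : ∑ c ∈ f.support, f c = v := hfsum
      rw [e1, e2, e3]
      abel
    have heig : ∀ c ∈ insert 0 f.support,
        sl.bracket (t : L) (vv c) = ((wSum w c).domRestrict hE t) • vv c := by
      intro c _
      by_cases h0 : c = 0
      · subst h0
        have e1 : vv 0 = -v := by rw [hvv]; simp
        rw [e1, map_neg, hqt (t : L) t.2 v hvH]
        have e2 : ((wSum w (0 : Fin n → ℕ)).domRestrict hE) t = 0 := by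
          simp [LinearMap.domRestrict_apply, wSum_apply]
        rw [e2, zero_smul, neg_zero]
      · have hfc : f c ∈ wSpace sl hE (wSum w c) := by
          have hm := hf c
          rwa [hWmem h0] at hm
        have e1 : vv c = f c := by rw [hvv]; simp [h0]
        rw [e1, mem_wSpace.mp hfc (t : L) t.2]
        simp [LinearMap.domRestrict_apply]
    have hall := eig_lemma (sl.bracket (t : L)) (fun c => (wSum w c).domRestrict hE t)
      (insert 0 f.support) vv htsep heig hsum0
    have hv0 := hall 0 (Finset.mem_insert_self _ _)
    rw [hvv] at hv0
    simp only [if_true, eq_self_iff_true, if_pos, neg_eq_zero] at hv0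
    simpa using hv0
  -- core: homogeneous x
  have hcore : ∀ x ∈ lieSpan sl.bracket (⨆ i, P i), sl.Homog x →
      (∀ i, ∀ q ∈ Q i, sl.bracket q x = 0) → x = 0 := by
    intro x hxNP hxhom hxq
    set SS : Set (Submodule ℂ L) := {N | x ∈ N ∧ N ≤ lieSpan sl.bracket (⨆ i, P i) ∧
      ∀ a ∈ (hE ⊔ hO) ⊔ lieSpan sl.bracket (⨆ i, P i), ∀ v ∈ N, sl.bracket a v ∈ N} with hSS
    have hNPSS : lieSpan sl.bracket (⨆ i, P i) ∈ SS := ⟨hxNP, le_rfl, hstabHNP⟩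
    set J := sInf SS with hJ
    have hxJ : x ∈ J := Submodule.mem_sInf.mpr fun N hN => hN.1
    have hJNP : J ≤ lieSpan sl.bracket (⨆ i, P i) := sInf_le hNPSS
    have hJstab : ∀ a ∈ (hE ⊔ hO) ⊔ lieSpan sl.bracket (⨆ i, P i), ∀ v ∈ J,
        sl.bracket a v ∈ J := by
      intro a ha v hv
      rw [hJ, Submodule.mem_sInf] at hv ⊢
      intro N hN
      exact hN.2.2 a ha v (hv N hN)
    set T := J ⊓ ⨅ (i : Fin n), ⨅ q ∈ Q i, Submodule.comap (sl.bracket q) J with hT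
    have hmemT : ∀ {v : L}, v ∈ T ↔ v ∈ J ∧ ∀ i, ∀ q ∈ Q i, sl.bracket q v ∈ J := by
      intro v
      rw [hT]
      simp [Submodule.mem_inf, Submodule.mem_iInf, Submodule.mem_comap]
    have hTSS : T ∈ SS := by
      refine ⟨?_, le_trans inf_le_left hJNP, ?_⟩
      · exact hmemT.mpr ⟨hxJ, fun i q hq => by rw [hxq i q hq]; exact J.zero_mem⟩
      · have hAstab : ∀ t, sl.Homog t → t ∈ hE ⊔ hO → t ∈ sl.Stab T := by
          intro t hth htH
          rw [sl.mem_Stab]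
          intro v hv
          obtain ⟨hvJ, hvQ⟩ := hmemT.mp hv
          refine hmemT.mpr ⟨hJstab t (Submodule.mem_sup_left htH) v hvJ, ?_⟩
          intro i q hq
          have key : ∀ q', sl.Homog q' → q' ∈ Q i →
              sl.bracket q' (sl.bracket t v) ∈ J := by
            intro q' hq'h hq'
            refine sl.jac_rot_mem hq'h hth v ?_ ?_
            · have hqt' : sl.bracket q' t ∈ Q i :=
                sl.skew_mem hq'h hth (Qmod i t htH q' hq')
              exact hvQ i _ hqt'
            · exact hJstab t (Submodule.mem_sup_left htH) _ (hvQ i q' hq')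
          rw [Qg i] at hq
          obtain ⟨qe, hqe, qo, hqo, rfl⟩ := Submodule.mem_sup.mp hq
          obtain ⟨hqe1, hqe2⟩ := Submodule.mem_inf.mp hqe
          obtain ⟨hqo1, hqo2⟩ := Submodule.mem_inf.mp hqo
          have e : sl.bracket (qe + qo) (sl.bracket t v)
              = sl.bracket qe (sl.bracket t v) + sl.bracket qo (sl.bracket t v) := by
            simp [map_add, LinearMap.add_apply]
          rw [e]
          exact J.add_mem (key qe (Or.inl hqe2) hqe1) (key qo (Or.inr hqo2) hqo1)
        have hPstabT : ∀ j, ∀ p, sl.Homog p → p ∈ P j → p ∈ sl.Stab T := by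
          intro j p hph hp
          rw [sl.mem_Stab]
          intro v hv
          obtain ⟨hvJ, hvQ⟩ := hmemT.mp hv
          refine hmemT.mpr ⟨hJstab p (Submodule.mem_sup_right (hPle j hp)) v hvJ, ?_⟩
          intro i q hq
          have key : ∀ q', sl.Homog q' → q' ∈ Q i →
              sl.bracket q' (sl.bracket p v) ∈ J := by
            intro q' hq'h hq'
            refine sl.jac_rot_mem hq'h hph v ?_ ?_
            · by_cases hij : i = j
              · subst hij
                exact hJstab _ (Submodule.mem_sup_left (pairQP i q' hq' p hp)) v hvJ
              · rw [pairQPne i j hij q' hq' p hp]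
                have e : sl.bracket (0 : L) v = 0 := by simp
                rw [e]
                exact J.zero_mem
            · exact hJstab p (Submodule.mem_sup_right (hPle j hp)) _ (hvQ i q' hq')
          rw [Qg i] at hq
          obtain ⟨qe, hqe, qo, hqo, rfl⟩ := Submodule.mem_sup.mp hq
          obtain ⟨hqe1, hqe2⟩ := Submodule.mem_inf.mp hqe
          obtain ⟨hqo1, hqo2⟩ := Submodule.mem_inf.mp hqo
          have e : sl.bracket (qe + qo) (sl.bracket p v)
              = sl.bracket qe (sl.bracket p v) + sl.bracket qo (sl.bracket p v) := by
            simp [map_add, LinearMap.add_apply]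
          rw [e]
          exact J.add_mem (key qe (Or.inl hqe2) hqe1) (key qo (Or.inr hqo2) hqo1)
        have hHT : hE ⊔ hO ≤ sl.Stab T := by
          refine sup_le ?_ ?_
          · intro t ht
            exact hAstab t (Or.inl (hEe ht)) (Submodule.mem_sup_left ht)
          · intro t ht
            exact hAstab t (Or.inr (hOo ht)) (Submodule.mem_sup_right ht)
        have hPT : ∀ j, P j ≤ sl.Stab T := by
          intro j
          conv_lhs => rw [Pg j]
          refine sup_le ?_ ?_
          · intro p hp
            obtain ⟨hp1, hp2⟩ := Submodule.mem_inf.mp hp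
            exact hPstabT j p (Or.inl hp2) hp1
          · intro p hp
            obtain ⟨hp1, hp2⟩ := Submodule.mem_inf.mp hp
            exact hPstabT j p (Or.inr hp2) hp1
        have hNPT : lieSpan sl.bracket (⨆ i, P i) ≤ sl.Stab T := by
          refine le_trans ?_ (sl.Grd_le _)
          apply lieSpan_le'
          · exact iSup_le fun j => sl.graded_le_Grd (Pg j) (hPT j)
          · exact sl.grd_stab_closed T
        intro a ha v hv
        exact sl.mem_Stab.mp ((sup_le hHT hNPT) ha) v hv
    have hJT : ∀ v ∈ J, ∀ i, ∀ q ∈ Q i, sl.bracket q v ∈ J := by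
      intro v hv
      exact (hmemT.mp (sInf_le hTSS hv)).2
    have hStabJ : ∀ a : L, ∀ v ∈ J, sl.bracket a v ∈ J := by
      have htop : (⊤ : Submodule ℂ L) ≤ sl.Stab J := by
        rw [← htri]
        refine sup_le ?_ (sup_le ?_ ?_)
        · refine le_trans ?_ (sl.Grd_le _)
          apply lieSpan_le'
          · refine iSup_le fun i => sl.graded_le_Grd (Qg i) ?_
            intro q hq
            rw [sl.mem_Stab]
            intro v hv
            exact hJT v hv i q hq
          · exact sl.grd_stab_closed J
        · intro t ht
          rw [sl.mem_Stab]
          intro v hv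
          exact hJstab t (Submodule.mem_sup_left ht) v hv
        · intro p hp
          rw [sl.mem_Stab]
          intro v hv
          exact hJstab p (Submodule.mem_sup_right hp) v hv
      intro a v hv
      exact sl.mem_Stab.mp (htop Submodule.mem_top) v hv
    have hHNPgr : (hE ⊔ hO) ⊔ lieSpan sl.bracket (⨆ i, P i) ≤
        sl.Grd ((hE ⊔ hO) ⊔ lieSpan sl.bracket (⨆ i, P i)) := by
      refine sup_le (sup_le ?_ ?_) ?_
      · intro t ht
        exact Submodule.mem_sup_left (Submodule.mem_inf.mpr
          ⟨Submodule.mem_sup_left (Submodule.mem_sup_left ht), hEe ht⟩)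
      · intro t ht
        exact Submodule.mem_sup_right (Submodule.mem_inf.mpr
          ⟨Submodule.mem_sup_left (Submodule.mem_sup_right ht), hOo ht⟩)
      · exact le_trans hNPg (sl.Grd_mono le_sup_right)
    have hJgr : J ≤ sl.Grd J := by
      have hGSS : sl.Grd J ∈ SS := by
        refine ⟨?_, le_trans (sl.Grd_le J) hJNP, ?_⟩
        · rcases hxhom with hx | hx
          · exact Submodule.mem_sup_left (Submodule.mem_inf.mpr ⟨hxJ, hx⟩)
          · exact Submodule.mem_sup_right (Submodule.mem_inf.mpr ⟨hxJ, hx⟩)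
        · intro a ha v hv
          obtain ⟨ae, hae, ao, hao, rfl⟩ := Submodule.mem_sup.mp (hHNPgr ha)
          obtain ⟨hae1, hae2⟩ := Submodule.mem_inf.mp hae
          obtain ⟨hao1, hao2⟩ := Submodule.mem_inf.mp hao
          obtain ⟨ve, hve, vo, hvo, rfl⟩ := Submodule.mem_sup.mp hv
          obtain ⟨hve1, hve2⟩ := Submodule.mem_inf.mp hve
          obtain ⟨hvo1, hvo2⟩ := Submodule.mem_inf.mp hvo
          have e : sl.bracket (ae + ao) (ve + vo) = sl.bracket ae ve + sl.bracket ae vo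
              + (sl.bracket ao ve + sl.bracket ao vo) := by
            simp only [map_add, LinearMap.add_apply]; abel
          rw [e]
          refine add_mem (add_mem ?_ ?_) (add_mem ?_ ?_)
          · exact Submodule.mem_sup_left (Submodule.mem_inf.mpr
              ⟨hJstab _ hae1 _ hve1, sl.ee_mem _ hae2 _ hve2⟩)
          · exact Submodule.mem_sup_right (Submodule.mem_inf.mpr
              ⟨hJstab _ hae1 _ hvo1, sl.eo_mem _ hae2 _ hvo2⟩)
          · exact Submodule.mem_sup_right (Submodule.mem_inf.mpr
              ⟨hJstab _ hao1 _ hve1, sl.oe_mem _ hao2 _ hve2⟩)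
          · exact Submodule.mem_sup_left (Submodule.mem_inf.mpr
              ⟨hJstab _ hao1 _ hvo1, sl.oo_mem _ hao2 _ hvo2⟩)
      exact sInf_le hGSS
    have hideal : IsBracketIdeal sl.bracket J := by
      intro a v hv
      refine ⟨hStabJ a v hv, ?_⟩
      obtain ⟨ve, hve, vo, hvo, rfl⟩ := Submodule.mem_sup.mp (hJgr hv)
      obtain ⟨hve1, hve2⟩ := Submodule.mem_inf.mp hve
      obtain ⟨hvo1, hvo2⟩ := Submodule.mem_inf.mp hvo
      have hatop : a ∈ sl.even ⊔ sl.odd := by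
        rw [sl.compl.sup_eq_top]
        exact Submodule.mem_top
      obtain ⟨ae, hae, ao, hao, rfl⟩ := Submodule.mem_sup.mp hatop
      have e : sl.bracket (ve + vo) (ae + ao) = sl.bracket ve ae + sl.bracket ve ao
          + (sl.bracket vo ae + sl.bracket vo ao) := by
        simp only [map_add, LinearMap.add_apply]; abel
      rw [e]
      refine add_mem (add_mem ?_ ?_) (add_mem ?_ ?_)
      · exact sl.skew_mem (Or.inl hve2) (Or.inl hae) (hStabJ ae ve hve1)
      · exact sl.skew_mem (Or.inl hve2) (Or.inr hao) (hStabJ ao ve hve1)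
      · exact sl.skew_mem (Or.inr hvo2) (Or.inl hae) (hStabJ ae vo hvo1)
      · exact sl.skew_mem (Or.inr hvo2) (Or.inr hao) (hStabJ ao vo hvo1)
    have hJh : J ⊓ (hE ⊔ hO) = ⊥ := by
      refine (Submodule.eq_bot_iff _).mpr fun v hv => ?_
      obtain ⟨hv1, hv2⟩ := Submodule.mem_inf.mp hv
      exact hNPH v (hJNP hv1) hv2
    have hJbot := hred J hideal hJh
    rw [hJbot] at hxJ
    simpa using hxJ
  -- general case
  intro x hx hq
  obtain ⟨xe, hxe, xo, hxo, rfl⟩ := Submodule.mem_sup.mp (hNPg hx)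
  obtain ⟨hxe1, hxe2⟩ := Submodule.mem_inf.mp hxe
  obtain ⟨hxo1, hxo2⟩ := Submodule.mem_inf.mp hxo
  have hsplit : ∀ i, ∀ q ∈ Q i, sl.bracket q xe = 0 ∧ sl.bracket q xo = 0 := by
    intro i q hq'
    have keyh : ∀ q', sl.Homog q' → q' ∈ Q i →
        sl.bracket q' xe = 0 ∧ sl.bracket q' xo = 0 := by
      intro q' hq'h hq'Q
      have e : sl.bracket q' xe + sl.bracket q' xo = 0 := by
        rw [← map_add]
        exact hq i q' hq'Q
      rcases hq'h with hqe | hqo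
      · exact sl.split_zero (sl.ee_mem q' hqe xe hxe2) (sl.eo_mem q' hqe xo hxo2) e
      · have h2 := sl.split_zero (sl.oo_mem q' hqo xo hxo2) (sl.oe_mem q' hqo xe hxe2)
          (by rw [add_comm]; exact e)
        exact ⟨h2.2, h2.1⟩
    rw [Qg i] at hq'
    obtain ⟨qe, hqe', qo, hqo', rfl⟩ := Submodule.mem_sup.mp hq'
    obtain ⟨hqe1, hqe2⟩ := Submodule.mem_inf.mp hqe'
    obtain ⟨hqo1, hqo2⟩ := Submodule.mem_inf.mp hqo'
    obtain ⟨he1, he2⟩ := keyh qe (Or.inl hqe2) hqe1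
    obtain ⟨ho1, ho2⟩ := keyh qo (Or.inr hqo2) hqo1
    constructor
    · have e : sl.bracket (qe + qo) xe = sl.bracket qe xe + sl.bracket qo xe := by
        simp [map_add, LinearMap.add_apply]
      rw [e, he1, ho1, add_zero]
    · have e : sl.bracket (qe + qo) xo = sl.bracket qe xo + sl.bracket qo xo := by
        simp [map_add, LinearMap.add_apply]
      rw [e, he2, ho2, add_zero]
  have hxe0 := hcore xe hxe1 (Or.inl hxe2) fun i q' hq' => (hsplit i q' hq').1
  have hxo0 := hcore xo hxo1 (Or.inr hxo2) fun i q' hq' => (hsplit i q' hq').2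
  rw [hxe0, hxo0, add_zero]

end MainAux

/-- In `𝔤(𝒜) = 𝔤̃(𝒜)/𝔯` (axiomatized by `D.Reduced`, together with its
triangular decomposition): if `x ∈ 𝔫⁺` satisfies `[𝔤_{-α_i}, x] = 0` for every simple root
`α_i`, then `x = 0`; similarly if `y ∈ 𝔫⁻` satisfies `[𝔤_{α_i}, y] = 0` for all `i`, then
`y = 0`. -/
theorem gA_no_lowest_weight_vectors
    {L : Type} [AddCommGroup L] [Module ℂ L] (D : CartanDatum L)
    (hred : D.Reduced) (htri : D.Triangular) :
    (∀ x ∈ D.Np, (∀ i, ∀ y ∈ D.gm i, D.sl.bracket y x = 0) → x = 0) ∧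
    (∀ y ∈ D.Nm, (∀ i, ∀ x ∈ D.gp i, D.sl.bracket x y = 0) → y = 0) := by
  have hredu : ∀ I : Submodule ℂ L, IsBracketIdeal D.sl.bracket I →
      I ⊓ (D.hE ⊔ D.hO) = ⊥ → I = ⊥ := hred
  constructor
  · intro x hx hq
    refine main_aux D.sl D.hE D.hO D.hE_le D.hO_le D.quasitoral D.alpha D.indep D.gp D.gm
      D.gp_graded D.gm_graded D.gp_wt D.gp_mod D.gm_mod ?_ ?_ hredu htri x hx hq
    · intro i
      exact D.sl.flip_pair (D.gp_graded i) (D.gm_graded i) (D.pair_mem i)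
    · intro i j hij q hq' p hp
      have h0 : D.sl.bracket q p ∈ (⊥ : Submodule ℂ L) := by
        refine D.sl.flip_pair (D.gp_graded j) (D.gm_graded i) ?_ q hq' p hp
        intro a ha c hc
        rw [D.pair_ne j i (Ne.symm hij) a ha c hc]
        exact Submodule.zero_mem _
      simpa using h0
  · intro y hy hq
    have hindep2 : LinearIndependent ℂ fun i => ((-(D.alpha i)).domRestrict D.hE) := by
      have he : (fun i => ((-(D.alpha i)).domRestrict D.hE))
          = fun i => ((-1 : ℂˣ) : ℂ) • ((D.alpha i).domRestrict D.hE) := by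
        funext i
        ext t
        simp
      rw [he]
      exact D.indep.units_smul fun _ => (-1 : ℂˣ)
    have htri2 : lieSpan D.sl.bracket (⨆ i, D.gp i) ⊔
        ((D.hE ⊔ D.hO) ⊔ lieSpan D.sl.bracket (⨆ i, D.gm i)) = ⊤ := by
      have h0 : D.Nm ⊔ (D.h ⊔ D.Np) = ⊤ := htri
      calc lieSpan D.sl.bracket (⨆ i, D.gp i) ⊔
          ((D.hE ⊔ D.hO) ⊔ lieSpan D.sl.bracket (⨆ i, D.gm i))
          = D.Np ⊔ (D.h ⊔ D.Nm) := rfl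
        _ = D.Nm ⊔ (D.h ⊔ D.Np) := by
            rw [← sup_assoc, sup_comm (D.Np ⊔ D.h) D.Nm, sup_comm D.Np D.h]
        _ = ⊤ := h0
    refine main_aux D.sl D.hE D.hO D.hE_le D.hO_le D.quasitoral (fun i => -(D.alpha i))
      hindep2 D.gm D.gp D.gm_graded D.gp_graded ?_ D.gm_mod D.gp_mod
      (fun i => D.pair_mem i) D.pair_ne hredu htri2 y hy hq
    intro i t ht v hv
    rw [D.gm_wt i t ht v hv]
    simp
end
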